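/- Every finite strategic game satisfying positive population monotonicity in which every player has the same two strategies is coalitionally weakly acyclic: from every initial joint strategy there is a finite coalitional improvement path ending in a strong equilibrium. In particular, every coordination game on a directed graph in which only two colours are used has a strong equilibrium. -/

import Mathlib

/-- `s'` is a profitable deviation (of the non-empty coalition on which `s`
and `s'` differ) from `s`: every deviating player strictly improves. -/
def ProfDev {n : ℕ} {S : Type} (p : (Fin n → S) → Fin n → ℝ)
    (s s' : Fin n → S) : Prop :=
  s ≠ s' ∧ ∀ i, s i ≠ s' i → p s i < p s' i

/-- A strong equilibrium: no coalition has a profitable deviation. -/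
def StrongEq {n : ℕ} {S : Type} (p : (Fin n → S) → Fin n → ℝ)
    (s : Fin n → S) : Prop :=
  ∀ s', ¬ ProfDev p s s'

/-- A profitable deviation in which every deviator switches to colour `c`. -/
def CDev {n : ℕ} (p : (Fin n → Bool) → Fin n → ℝ) (c : Bool)
    (s s' : Fin n → Bool) : Prop :=
  ProfDev p s s' ∧ ∀ i, s i ≠ s' i → s' i = c

/-- Generalized PPM: switching any set of players to `i`'s strategy weakly
improves `i`'s payoff. -/
lemma ppm_mono {n : ℕ} {p : (Fin n → Bool) → Fin n → ℝ}
    (hPPM : ∀ (s : Fin n → Bool) (i j : Fin n),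
      p s i ≤ p (Function.update s j (s i)) i) (i : Fin n) :
    ∀ (k : ℕ) (s t : Fin n → Bool),
      (Finset.univ.filter fun j => t j ≠ s j).card ≤ k →
      (∀ j, t j = s j ∨ t j = s i) → p s i ≤ p t i := by
  intro k
  induction k with
  | zero =>
    intro s t hc h
    have hst : s = t := by
      funext j
      by_contra hj
      have : j ∈ Finset.univ.filter fun j => t j ≠ s j := by
        simp [Ne.symm hj]
      simp [Finset.card_eq_zero.1 (Nat.le_zero.1 hc)] at this
    rw [hst]
  | succ k ih =>
    intro s t hc h
    by_cases hst : s = t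
    · rw [hst]
    · have : ∃ j, t j ≠ s j := by
        by_contra hall
        push_neg at hall
        exact hst (funext fun j => (hall j).symm)
      obtain ⟨j, hj⟩ := this
      have hji : j ≠ i := by
        intro e; subst e
        rcases h j with h' | h' <;> exact hj h'
      have htj : t j = s i := (h j).resolve_left hj
      set s₁ := Function.update s j (s i) with hs₁
      have h1 : p s i ≤ p s₁ i := hPPM s i j
      have hs₁i : s₁ i = s i := Function.update_of_ne (Ne.symm hji) _ _
      have h2 : ∀ m, t m = s₁ m ∨ t m = s₁ i := by
        intro m
        by_cases hm : m = j
        · subst hm; left; simp [hs₁, htj]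
        · rw [hs₁, Function.update_of_ne hm]
          rcases h m with h' | h'
          · exact Or.inl h'
          · exact Or.inr (h'.trans (Function.update_of_ne (Ne.symm hji) (s i) s).symm)
      have hsub : (Finset.univ.filter fun m => t m ≠ s₁ m) ⊆
          (Finset.univ.filter fun m => t m ≠ s m).erase j := by
        intro m hm
        simp only [Finset.mem_filter, Finset.mem_univ, true_and] at hm
        rcases eq_or_ne m j with rfl | hmj
        · exact absurd (by simp [hs₁, htj]) hm
        · refine Finset.mem_erase.2 ⟨hmj, ?_⟩
          simp only [Finset.mem_filter, Finset.mem_univ, true_and]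
          rwa [hs₁, Function.update_of_ne hmj] at hm
      have hcard : (Finset.univ.filter fun m => t m ≠ s₁ m).card ≤ k := by
        have hjmem : j ∈ (Finset.univ.filter fun m => t m ≠ s m) := by simp [hj]
        have := Finset.card_le_card hsub
        have h2' := Finset.card_erase_of_mem hjmem
        omega
      exact h1.trans (ih s₁ t hcard h2)

/-- Convenient form of the monotonicity lemma. -/
lemma ppm_mono' {n : ℕ} {p : (Fin n → Bool) → Fin n → ℝ}
    (hPPM : ∀ (s : Fin n → Bool) (i j : Fin n),
      p s i ≤ p (Function.update s j (s i)) i) (i : Fin n)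
    (s t : Fin n → Bool) (h : ∀ j, t j = s j ∨ t j = s i) : p s i ≤ p t i :=
  ppm_mono hPPM i _ s t le_rfl h

/-- Any profitable deviation gives rise to a single-colour profitable
deviation. -/
lemma cdev_of_profdev {n : ℕ} {p : (Fin n → Bool) → Fin n → ℝ}
    (hPPM : ∀ (s : Fin n → Bool) (i j : Fin n),
      p s i ≤ p (Function.update s j (s i)) i)
    {s s' : Fin n → Bool} (h : ProfDev p s s') :
    ∃ c s'', CDev p c s s'' := by
  obtain ⟨hne, hprof⟩ := h
  have : ∃ i, s i ≠ s' i := by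
    by_contra hall
    push_neg at hall
    exact hne (funext hall)
  obtain ⟨i, hi⟩ := this
  set c := s' i with hc
  refine ⟨c, fun j => if s j ≠ s' j ∧ s' j = c then c else s j, ?_, ?_⟩
  · constructor
    · intro he
      have := congrFun he i
      simp [hi, hc] at this
      exact hi this
    · intro j hj
      by_cases hcond : s j ≠ s' j ∧ s' j = c
      · simp only [if_pos hcond] at hj ⊢
        have h1 : p s j < p s' j := hprof j hcond.1
        have h2 : p s' j ≤ p (fun m => if s m ≠ s' m ∧ s' m = c then c else s m) j := by
          apply ppm_mono' hPPM
          intro m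
          by_cases hm : s m ≠ s' m ∧ s' m = c
          · simp only [if_pos hm]; left; exact hm.2.symm
          · simp only [if_neg hm]
            by_cases hms : s m = s' m
            · exact Or.inl hms
            · right
              have hsc : s' m ≠ c := fun e => hm ⟨hms, e⟩
              rw [hcond.2]
              revert hms hsc
              cases s m <;> cases s' m <;> cases c <;> simp
        linarith
      · simp only [if_neg hcond] at hj
        exact absurd rfl hj
  · intro j hj
    by_cases hcond : s j ≠ s' j ∧ s' j = c
    · simp [hcond]
    · simp only [if_neg hcond] at hj
      exact absurd rfl hj

/-- If a state has no to-`true` deviation, this persists along to-`false`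
deviations. -/
lemma no_true_persist {n : ℕ} {p : (Fin n → Bool) → Fin n → ℝ}
    (hPPM : ∀ (s : Fin n → Bool) (i j : Fin n),
      p s i ≤ p (Function.update s j (s i)) i)
    {s s' : Fin n → Bool} (hnb : ∀ t, ¬ CDev p true s t)
    (hr : CDev p false s s') : ∀ t, ¬ CDev p true s' t := by
  intro t ht
  obtain ⟨⟨hne', hprof'⟩, hcol'⟩ := ht
  obtain ⟨⟨hne, hprof⟩, hcol⟩ := hr
  by_cases hcase : ∃ i, s i = false ∧ s' i ≠ t i
  · -- the players that play false at s and deviate from s' to t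
    -- form a profitable to-true deviation from s
    obtain ⟨i₀, hi₀1, hi₀2⟩ := hcase
    set u : Fin n → Bool := fun j => if s j = false ∧ s' j ≠ t j then true else s j
      with hu
    apply hnb u
    have hdev : ∀ j, s j ≠ u j ↔ (s j = false ∧ s' j ≠ t j) := by
      intro j
      constructor
      · intro hj
        by_contra hc
        have : u j = s j := by simp only [hu, if_neg hc]
        exact hj this.symm
      · rintro ⟨h1, h2⟩
        have : u j = true := by simp [hu, h1, h2]
        rw [this, h1]; simp
    refine ⟨⟨?_, ?_⟩, ?_⟩
    · intro he
      exact ((hdev i₀).2 ⟨hi₀1, hi₀2⟩) (congrFun he i₀)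
    · intro j hj
      obtain ⟨hjf, hjd⟩ := (hdev j).1 hj
      have huj : u j = true := by simp [hu, hjf, hjd]
      have htj : t j = true := hcol' j hjd
      have hs'j : s' j = false := by
        cases h' : s' j
        · rfl
        · exact absurd (h'.trans htj.symm) hjd
      have h1 : p s j ≤ p s' j := by
        apply ppm_mono' hPPM
        intro m
        by_cases hm : s m = s' m
        · exact Or.inl hm.symm
        · right; rw [hjf]; exact hcol m hm
      have h2 : p s' j < p t j := hprof' j hjd
      have h3 : p t j ≤ p u j := by
        apply ppm_mono' hPPM
        intro m
        by_cases hcond : s m = false ∧ s' m ≠ t m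
        · right; simp [hu, hcond, htj]
        · have hum : u m = s m := by simp [hu, hcond]
          cases hsm : s m
          · left
            have hs'm : s' m = t m := by
              by_contra h'
              exact hcond ⟨hsm, h'⟩
            have hsm' : s' m = s m := by
              by_cases h' : s m = s' m
              · exact h'.symm
              · exact (hcol m h').trans hsm.symm
            rw [hum, ← hsm', hs'm]
          · right; rw [hum, hsm, htj]
      calc p s j ≤ p s' j := h1
        _ < p t j := h2
        _ ≤ p u j := h3
    · intro j hj
      obtain ⟨hjf, hjd⟩ := (hdev j).1 hj
      simp [hu, hjf, hjd]
  · -- all deviators from s' to t deviated from s to s'; they went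
    -- false → true profitably twice, contradicting monotonicity
    push_neg at hcase
    have : ∃ i, s' i ≠ t i := by
      by_contra hall
      push_neg at hall
      exact hne' (funext hall)
    obtain ⟨i, hi⟩ := this
    have hti : t i = true := hcol' i hi
    have hs'i : s' i = false := by
      cases h' : s' i
      · rfl
      · exact absurd (h'.trans hti.symm) hi
    have hsi : s i = true := by
      cases h' : s i
      · exact absurd (hcase i h') (by rw [hs'i, hti]; simp)
      · rfl
    have hdev1 : s i ≠ s' i := by rw [hsi, hs'i]; simp
    have h1 : p s i < p s' i := hprof i hdev1
    have h2 : p s' i < p t i := hprof' i hi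
    have h3 : p t i ≤ p s i := by
      apply ppm_mono' hPPM
      intro m
      cases hsm : s m
      · left
        have hs'm : s' m = t m := hcase m hsm
        have hsm' : s m = s' m := by
          by_cases h' : s m = s' m
          · exact h'
          · rw [hsm]; exact (hcol m h').symm
        rw [← hs'm, ← hsm']; exact hsm.symm
      · right; rw [hti]
    linarith

/-- From any state, some to-`true`-deviation-free state is reachable. -/
lemma reach_no_true {n : ℕ} {p : (Fin n → Bool) → Fin n → ℝ} :
    ∀ (k : ℕ) (s : Fin n → Bool),
      (Finset.univ.filter fun j => s j = false).card ≤ k →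
      ∃ t, Relation.ReflTransGen (ProfDev p) s t ∧ ∀ u, ¬ CDev p true t u := by
  intro k
  induction k with
  | zero =>
    intro s hc
    refine ⟨s, Relation.ReflTransGen.refl, ?_⟩
    intro u ⟨⟨hne, _⟩, hcol⟩
    apply hne
    funext j
    by_contra hj
    have : s j = false := by
      cases h' : s j
      · rfl
      · exact absurd (h'.trans (hcol j hj).symm) hj
    have : j ∈ Finset.univ.filter fun j => s j = false := by simp [this]
    simp [Finset.card_eq_zero.1 (Nat.le_zero.1 hc)] at this
  | succ k ih =>
    intro s hc
    by_cases hex : ∃ u, CDev p true s u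
    · obtain ⟨u, hu⟩ := hex
      obtain ⟨⟨hne, hprof⟩, hcol⟩ := hu
      have : ∃ i, s i ≠ u i := by
        by_contra hall; push_neg at hall; exact hne (funext hall)
      obtain ⟨i, hi⟩ := this
      have hsub : (Finset.univ.filter fun j => u j = false) ⊆
          (Finset.univ.filter fun j => s j = false).erase i := by
        intro j hj
        simp only [Finset.mem_filter, Finset.mem_univ, true_and] at hj
        have hsj : s j = u j := by
          by_contra h'
          rw [hcol j h'] at hj; exact absurd hj (by simp)
        refine Finset.mem_erase.2 ⟨?_, by simp [hsj.trans hj]⟩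
        intro e; subst e
        exact hi hsj
      have himem : i ∈ Finset.univ.filter fun j => s j = false := by
        have : u i = true := hcol i hi
        have : s i = false := by
          cases h' : s i
          · rfl
          · rw [h', this] at hi; exact absurd rfl hi
        simp [this]
      have hcard : (Finset.univ.filter fun j => u j = false).card ≤ k := by
        have := Finset.card_le_card hsub
        have h2 := Finset.card_erase_of_mem himem
        omega
      obtain ⟨t, hpath, hnb⟩ := ih u hcard
      exact ⟨t, Relation.ReflTransGen.head ⟨hne, hprof⟩ hpath, hnb⟩
    · push_neg at hex
      exact ⟨s, Relation.ReflTransGen.refl, hex⟩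

/-- From a to-`true`-deviation-free state, a strong equilibrium is
reachable. -/
lemma reach_strong {n : ℕ} {p : (Fin n → Bool) → Fin n → ℝ}
    (hPPM : ∀ (s : Fin n → Bool) (i j : Fin n),
      p s i ≤ p (Function.update s j (s i)) i) :
    ∀ (k : ℕ) (s : Fin n → Bool),
      (Finset.univ.filter fun j => s j = true).card ≤ k →
      (∀ u, ¬ CDev p true s u) →
      ∃ t, Relation.ReflTransGen (ProfDev p) s t ∧
        (∀ u, ¬ CDev p true t u) ∧ (∀ u, ¬ CDev p false t u) := by
  intro k
  induction k with
  | zero =>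
    intro s hc hnb
    refine ⟨s, Relation.ReflTransGen.refl, hnb, ?_⟩
    intro u ⟨⟨hne, _⟩, hcol⟩
    apply hne
    funext j
    by_contra hj
    have : s j = true := by
      cases h' : s j
      · exact absurd (h'.trans (hcol j hj).symm) hj
      · rfl
    have : j ∈ Finset.univ.filter fun j => s j = true := by simp [this]
    simp [Finset.card_eq_zero.1 (Nat.le_zero.1 hc)] at this
  | succ k ih =>
    intro s hc hnb
    by_cases hex : ∃ u, CDev p false s u
    · obtain ⟨u, hu⟩ := hex
      have hnb' : ∀ t, ¬ CDev p true u t := no_true_persist hPPM hnb hu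
      obtain ⟨⟨hne, hprof⟩, hcol⟩ := hu
      have : ∃ i, s i ≠ u i := by
        by_contra hall; push_neg at hall; exact hne (funext hall)
      obtain ⟨i, hi⟩ := this
      have hsub : (Finset.univ.filter fun j => u j = true) ⊆
          (Finset.univ.filter fun j => s j = true).erase i := by
        intro j hj
        simp only [Finset.mem_filter, Finset.mem_univ, true_and] at hj
        have hsj : s j = u j := by
          by_contra h'
          rw [hcol j h'] at hj; exact absurd hj (by simp)
        refine Finset.mem_erase.2 ⟨?_, by simp [hsj.trans hj]⟩
        intro e; subst e
        exact hi hsj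
      have himem : i ∈ Finset.univ.filter fun j => s j = true := by
        have hui : u i = false := hcol i hi
        have : s i = true := by
          cases h' : s i
          · rw [h', hui] at hi; exact absurd rfl hi
          · rfl
        simp [this]
      have hcard : (Finset.univ.filter fun j => u j = true).card ≤ k := by
        have := Finset.card_le_card hsub
        have h2 := Finset.card_erase_of_mem himem
        omega
      obtain ⟨t, hpath, ht1, ht2⟩ := ih u hcard hnb'
      exact ⟨t, Relation.ReflTransGen.head ⟨hne, hprof⟩ hpath, ht1, ht2⟩
    · push_neg at hex
      exact ⟨s, Relation.ReflTransGen.refl, hnb, hex⟩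

/-- Every finite strategic game satisfying positive population monotonicity
(player `i`'s payoff weakly increases when any player `j` switches to `i`'s
strategy) in which every player has the same two strategies (modelled as
`Bool`) is coalitionally weakly acyclic: from every initial joint strategy
there is a finite coalitional improvement path ending in a strong equilibrium.
In particular (since coordination games satisfy PPM), every coordination game
on a directed graph in which only two colours are used has a strong
equilibrium. -/
theorem two_strategy_PPM_c_weakly_acyclic {n : ℕ}
    (p : (Fin n → Bool) → Fin n → ℝ)
    (hPPM : ∀ (s : Fin n → Bool) (i j : Fin n),
      p s i ≤ p (Function.update s j (s i)) i) :
    ∀ s : Fin n → Bool,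
      ∃ t, Relation.ReflTransGen (ProfDev p) s t ∧ StrongEq p t := by
  intro s
  obtain ⟨s₀, hpath₀, hnb₀⟩ := reach_no_true (p := p)
    (Finset.univ.filter fun j => s j = false).card s le_rfl
  obtain ⟨t, hpath, ht1, ht2⟩ := reach_strong hPPM
    (Finset.univ.filter fun j => s₀ j = true).card s₀ le_rfl hnb₀
  refine ⟨t, hpath₀.trans hpath, ?_⟩
  intro s' hs'
  obtain ⟨c, s'', hc⟩ := cdev_of_profdev hPPM hs'
  cases c
  · exact ht2 s'' hc
  · exact ht1 s'' hc
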